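/- arXiv:2310.20266 — 5 statements merged into one kernel-verified Lean document; each statement's English description precedes it below -/
import Mathlib

section
/- Let f: ℝ → ℝ be twice continuously differentiable with f'(x) ≠ 0 for all x, and let φ: ℝ → ℝ be twice differentiable with φ(0) = 0, such that for all x, h ∈ ℝ, (f(x) + f(x+h))/2 = f(x + φ(h)). Then either f is affine (f(x) = a·x + b) or f is an affine transform of an exponential (f(x) = c₁·exp(β·x) + c₂ for some β ≠ 0). -/
/-- The core functional-equation argument: if the f-midpoint of `x` and `x+h` is
`f (x + φ h)` for all `x, h`, with `f` twice continuously differentiable with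
nonvanishing derivative and `φ` twice differentiable with `φ 0 = 0`, then `f`
is affine or an affine transform of an exponential. -/
theorem bellman_utility_affine_or_exponential
    (f φ : ℝ → ℝ)
    (hf : ContDiff ℝ 2 f)
    (hf' : ∀ x, deriv f x ≠ 0)
    (hφ : Differentiable ℝ φ)
    (hφ' : Differentiable ℝ (deriv φ))
    (hφ0 : φ 0 = 0)
    (heq : ∀ x h : ℝ, (f x + f (x + h)) / 2 = f (x + φ h)) :
    (∃ a b : ℝ, ∀ x, f x = a * x + b) ∨
    (∃ c₁ c₂ β : ℝ, β ≠ 0 ∧ ∀ x, f x = c₁ * Real.exp (β * x) + c₂) := by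
  have hd : Differentiable ℝ f := hf.differentiable (by norm_num)
  set g : ℝ → ℝ := deriv f with hgdef
  have hf2 : ContDiff ℝ ((1 : WithTop ℕ∞) + 1) f := by
    rw [show ((1 : WithTop ℕ∞) + 1) = 2 from rfl]; exact hf
  have hg : Differentiable ℝ g := by
    have := (contDiff_succ_iff_deriv.mp hf2).2.2
    exact this.differentiable (by norm_num)
  -- key1 : g(x+h)/2 = g(x+φh) * φ'(h)
  have key1 : ∀ x h : ℝ, g (x + h) / 2 = g (x + φ h) * deriv φ h := by
    intro x h
    have h1 : HasDerivAt (fun h : ℝ => (f x + f (x + h)) / 2) (g (x + h) / 2) h := by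
      have hin : HasDerivAt (fun h : ℝ => x + h) 1 h := by
        simpa using (hasDerivAt_id h).const_add x
      have := ((hd (x + h)).hasDerivAt.comp h hin).const_add (f x)
      have := this.div_const 2
      simpa using this
    have h2 : HasDerivAt (fun h : ℝ => f (x + φ h)) (g (x + φ h) * deriv φ h) h := by
      have hin : HasDerivAt (fun h : ℝ => x + φ h) (deriv φ h) h := by
        exact (hφ h).hasDerivAt.const_add x
      exact (hd (x + φ h)).hasDerivAt.comp h hin
    have h1' : HasDerivAt (fun h : ℝ => f (x + φ h)) (g (x + h) / 2) h :=
      h1.congr_of_eventuallyEq (Filter.Eventually.of_forall fun y => (heq x y).symm)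
    exact h1'.unique h2
  -- φ'(0) = 1/2
  have hφ'0 : deriv φ 0 = 1 / 2 := by
    have := key1 0 0
    rw [hφ0] at this
    simp only [add_zero] at this
    have h0 := hf' 0
    have h1 : g 0 * 1 = g 0 * (deriv φ 0 * 2) := by
      rw [mul_one, ← mul_assoc]
      field_simp at this
      linear_combination g 0 * this
    have := mul_left_cancel₀ h0 h1
    linarith
  -- second derivative relation : deriv g x = β * g x
  set β : ℝ := 4 * deriv (deriv φ) 0 with hβdef
  have key2 : ∀ x : ℝ, deriv g x = β * g x := by
    intro x
    have h1 : HasDerivAt (fun h : ℝ => g (x + h) / 2) (deriv g x / 2) 0 := by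
      have hin : HasDerivAt (fun h : ℝ => x + h) 1 0 := by
        simpa using (hasDerivAt_id (0:ℝ)).const_add x
      have := ((hg (x + 0)).hasDerivAt.comp 0 hin).div_const 2
      simpa using this
    have h2 : HasDerivAt (fun h : ℝ => g (x + φ h) * deriv φ h)
        (deriv g x * (1 / 2) * (1 / 2) + g x * deriv (deriv φ) 0) 0 := by
      have hin : HasDerivAt (fun h : ℝ => x + φ h) (deriv φ 0) 0 := by
        exact (hφ 0).hasDerivAt.const_add x
      have ha : HasDerivAt (fun h : ℝ => g (x + φ h)) (deriv g (x + φ 0) * deriv φ 0) 0 :=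
        by have := (hg (x + φ 0)).hasDerivAt.comp 0 hin; exact this
      have hb : HasDerivAt (deriv φ) (deriv (deriv φ) 0) 0 := (hφ' 0).hasDerivAt
      have := ha.mul hb
      rw [hφ0, hφ'0] at this
      exact this.congr_deriv (by simp [hφ0, hφ'0])
    have h1' : HasDerivAt (fun h : ℝ => g (x + φ h) * deriv φ h) (deriv g x / 2) 0 :=
      h1.congr_of_eventuallyEq (Filter.Eventually.of_forall fun y => (key1 x y).symm)
    have hu := h1'.unique h2
    rw [hβdef]
    nlinarith [hu]
  by_cases hb0 : β = 0
  · -- affine case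
    left
    have hz : ∀ x : ℝ, deriv g x = 0 := by intro x; rw [key2 x, hb0]; ring
    have hconst : ∀ x : ℝ, g x = g 0 := fun x => is_const_of_deriv_eq_zero hg hz x 0
    refine ⟨g 0, f 0, fun x => ?_⟩
    have hF : ∀ y : ℝ, deriv (fun x => f x - g 0 * x) y = 0 := by
      intro y
      have : HasDerivAt (fun x : ℝ => f x - g 0 * x) (g y - g 0 * 1) y :=
        (hd y).hasDerivAt.sub ((hasDerivAt_id y).const_mul (g 0))
      rw [this.deriv, hconst y]; ring
    have hdF : Differentiable ℝ (fun x : ℝ => f x - g 0 * x) :=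
      hd.sub (differentiable_id.const_mul (g 0))
    have := is_const_of_deriv_eq_zero hdF hF x 0
    simp only [mul_zero, sub_zero] at this
    linarith [this]
  · -- exponential case
    right
    have hgexp : ∀ x : ℝ, g x = g 0 * Real.exp (β * x) := by
      intro x
      have hk : ∀ y : ℝ, deriv (fun x => g x * Real.exp (-β * x)) y = 0 := by
        intro y
        have hlin : HasDerivAt (fun x : ℝ => -β * x) (-β) y := by
          simpa using (hasDerivAt_id y).const_mul (-β)
        have he : HasDerivAt (fun x : ℝ => Real.exp (-β * x)) (Real.exp (-β * y) * (-β)) y :=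
          hlin.exp
        have := (hg y).hasDerivAt.mul he
        rw [show (fun x => g x * Real.exp (-β * x)) = g * fun x => Real.exp (-β * x) from rfl, this.deriv, key2 y]; ring
      have hdk : Differentiable ℝ (fun x : ℝ => g x * Real.exp (-β * x)) := by
        apply hg.mul
        exact (Real.differentiable_exp.comp (differentiable_id.const_mul (-β)))
      have hc := is_const_of_deriv_eq_zero hdk hk x 0
      simp only [neg_mul, mul_zero, neg_zero, Real.exp_zero, mul_one] at hc
      have hx : Real.exp (-(β * x)) * Real.exp (β * x) = 1 := by
        rw [← Real.exp_add]; simp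
      calc g x = g x * (Real.exp (-(β * x)) * Real.exp (β * x)) := by rw [hx, mul_one]
        _ = (g x * Real.exp (-(β * x))) * Real.exp (β * x) := by ring
        _ = g 0 * Real.exp (β * x) := by rw [hc]
    refine ⟨g 0 / β, f 0 - g 0 / β, β, hb0, fun x => ?_⟩
    have hF : ∀ y : ℝ, deriv (fun x => f x - g 0 / β * Real.exp (β * x)) y = 0 := by
      intro y
      have hlin : HasDerivAt (fun x : ℝ => β * x) β y := by
        simpa using (hasDerivAt_id y).const_mul β
      have he : HasDerivAt (fun x : ℝ => Real.exp (β * x)) (Real.exp (β * y) * β) y :=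
        hlin.exp
      have := (hd y).hasDerivAt.sub (he.const_mul (g 0 / β))
      rw [show (fun x => f x - g 0 / β * Real.exp (β * x)) = f - fun y => g 0 / β * Real.exp (β * y) from rfl, this.deriv, show deriv f y = g y from rfl, hgexp y]
      field_simp
      ring
    have hdF : Differentiable ℝ (fun x : ℝ => f x - g 0 / β * Real.exp (β * x)) := by
      apply hd.sub
      exact ((Real.differentiable_exp.comp (differentiable_id.const_mul β)).const_mul _)
    have := is_const_of_deriv_eq_zero hdF hF x 0
    simp only [mul_zero, Real.exp_zero, mul_one] at this
    linarith [this]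
end

section
/- Let f: ℝ → ℝ and φ: ℝ → ℝ satisfy (f(x) + f(x+h))/2 = f(x + φ(h)) for all x, h, with f twice differentiable, φ twice differentiable, φ(0) = 0 and φ'(0) = 1/2. Then for all x, (1/4)·f''(x) = φ''(0)·f'(x). -/
/-- Second-order differentiation of the midpoint functional equation at `h = 0`:
`(1/4) f''(x) = φ''(0) f'(x)` for all `x`. -/
theorem second_order_identity
    (f φ : ℝ → ℝ)
    (hf : Differentiable ℝ f)
    (hf2 : Differentiable ℝ (deriv f))
    (hφ : Differentiable ℝ φ)
    (hφ2 : Differentiable ℝ (deriv φ))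
    (hφ0 : φ 0 = 0)
    (hφ'0 : deriv φ 0 = 1 / 2)
    (heq : ∀ x h : ℝ, (f x + f (x + h)) / 2 = f (x + φ h)) :
    ∀ x : ℝ, (1 / 4) * deriv (deriv f) x = deriv (deriv φ) 0 * deriv f x := by
  intro x
  have key : (fun h => (f x + f (x + h)) / 2) = (fun h => f (x + φ h)) :=
    funext (heq x)
  have eq1 : ∀ h : ℝ, deriv f (x + h) / 2 = deriv f (x + φ h) * deriv φ h := by
    intro h
    have hbase : HasDerivAt (fun h : ℝ => f (x + h)) (deriv f (x + h)) h := by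
      have hinner : HasDerivAt (fun h : ℝ => x + h) 1 h := (hasDerivAt_id h).const_add x
      simpa [Function.comp_def] using ((hf (x + h)).hasDerivAt.comp h hinner)
    have h1 : HasDerivAt (fun h : ℝ => (f x + f (x + h)) / 2) (deriv f (x + h) / 2) h := by
      simpa using ((hbase.const_add (f x)).div_const 2)
    have hinner2 : HasDerivAt (fun h : ℝ => x + φ h) (deriv φ h) h := by
      simpa using ((hφ h).hasDerivAt.const_add x)
    have h2 : HasDerivAt (fun h : ℝ => f (x + φ h)) (deriv f (x + φ h) * deriv φ h) h :=
      (hf (x + φ h)).hasDerivAt.comp h hinner2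
    rw [key] at h1
    exact h1.unique h2
  have keyd : (fun h : ℝ => deriv f (x + h) / 2)
      = (fun h : ℝ => deriv f (x + φ h) * deriv φ h) := funext eq1
  have hA : HasDerivAt (fun h : ℝ => deriv f (x + h) / 2) (deriv (deriv f) x / 2) 0 := by
    have hinner : HasDerivAt (fun h : ℝ => x + h) 1 0 := (hasDerivAt_id 0).const_add x
    have : HasDerivAt (fun h : ℝ => deriv f (x + h)) (deriv (deriv f) (x + 0) * 1) 0 :=
      (hf2 (x + 0)).hasDerivAt.comp 0 hinner
    simpa using this.div_const 2
  have hu : HasDerivAt (fun h : ℝ => deriv f (x + φ h))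
      (deriv (deriv f) (x + φ 0) * deriv φ 0) 0 := by
    have hinner : HasDerivAt (fun h : ℝ => x + φ h) (deriv φ 0) 0 := by
      simpa using ((hφ 0).hasDerivAt.const_add x)
    exact (hf2 (x + φ 0)).hasDerivAt.comp 0 hinner
  have hv : HasDerivAt (deriv φ) (deriv (deriv φ) 0) 0 := (hφ2 0).hasDerivAt
  have hB : HasDerivAt (fun h : ℝ => deriv f (x + φ h) * deriv φ h)
      (deriv (deriv f) (x + φ 0) * deriv φ 0 * deriv φ 0
        + deriv f (x + φ 0) * deriv (deriv φ) 0) 0 := hu.mul hv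
  rw [← keyd] at hB
  have hfin := hA.unique hB
  rw [hφ0, hφ'0, add_zero] at hfin
  linarith
end

section
/- Let μ be a probability measure on ℝ supported on an interval of length Δ, and let Π_Q μ = (1/N)·Σ_{i=0}^{N−1} δ_{z_i} be a quantile projection, where z_i = F⁻¹_μ((2i+1)/(2N)). Then W₁(Π_Q μ, μ) ≤ Δ/(2N). -/
open MeasureTheory Set
open scoped ENNReal

/-- Cumulative distribution function of a measure on ℝ. -/
noncomputable def cdf (ν : Measure ℝ) (x : ℝ) : ℝ := (ν (Iic x)).toReal

/-- Quantile function (generalized inverse CDF) of a measure on ℝ. -/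
noncomputable def quantile (ν : Measure ℝ) (u : ℝ) : ℝ := sInf {x | u ≤ cdf ν x}

/-- 1-Wasserstein distance on ℝ via quantile functions:
`W₁(ν₁, ν₂) = ∫₀¹ |F⁻¹_{ν₁}(u) − F⁻¹_{ν₂}(u)| du`. -/
noncomputable def W1 (ν₁ ν₂ : Measure ℝ) : ℝ :=
  ∫ u in Ioo (0:ℝ) 1, |quantile ν₁ u - quantile ν₂ u|

section Aux

variable {μ : Measure ℝ} [IsProbabilityMeasure μ] {a Δ : ℝ}

lemma aux_mem (hsupp : μ (Icc a (a + Δ))ᶜ = 0) {u : ℝ} (hu : u ≤ 1) :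
    a + Δ ∈ {x | u ≤ cdf μ x} := by
  have h0 : μ (Ioi (a + Δ)) = 0 := by
    refine measure_mono_null ?_ hsupp
    intro x hx
    simp only [mem_compl_iff, mem_Icc, not_and, not_le]
    intro _
    exact mem_Ioi.mp hx
  have h1 : μ (Iic (a + Δ)) = 1 := by
    rw [← prob_compl_eq_zero_iff measurableSet_Iic, compl_Iic]
    exact h0
  simp [cdf, h1, hu]

lemma aux_subset (hsupp : μ (Icc a (a + Δ))ᶜ = 0) {u : ℝ} (hu : 0 < u) :
    {x | u ≤ cdf μ x} ⊆ Ici a := by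
  intro x hx
  by_contra h
  simp only [mem_Ici, not_le] at h
  have h0 : μ (Iic x) = 0 := by
    refine measure_mono_null ?_ hsupp
    intro y hy
    simp only [mem_compl_iff, mem_Icc, not_and, not_le]
    intro hay
    exact absurd (le_trans hay (mem_Iic.mp hy)) (not_le.mpr h)
  have : cdf μ x = 0 := by simp [cdf, h0]
  rw [mem_setOf_eq, this] at hx
  linarith

lemma q_mem (hsupp : μ (Icc a (a + Δ))ᶜ = 0) {u : ℝ} (h0 : 0 < u) (h1 : u ≤ 1) :
    quantile μ u ∈ Icc a (a + Δ) :=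
  ⟨le_csInf ⟨a + Δ, aux_mem hsupp h1⟩ (fun _ hx => aux_subset hsupp h0 hx),
    csInf_le ⟨a, fun _ hx => aux_subset hsupp h0 hx⟩ (aux_mem hsupp h1)⟩

lemma q_mono (hsupp : μ (Icc a (a + Δ))ᶜ = 0) {u v : ℝ} (h0 : 0 < u) (huv : u ≤ v)
    (h1 : v ≤ 1) : quantile μ u ≤ quantile μ v :=
  csInf_le_csInf ⟨a, fun _ hx => aux_subset hsupp h0 hx⟩ ⟨a + Δ, aux_mem hsupp h1⟩
    (fun x hx => le_trans huv hx)

end Aux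

/-- Quantile projection error bound: for `μ` supported on an interval of length
`Δ`, the quantile projection with `N` atoms at the `(2i+1)/(2N)`-quantiles
satisfies `W₁(Π_Q μ, μ) ≤ Δ/(2N)`. -/
theorem quantile_projection_error_bound
    (μ : Measure ℝ) [IsProbabilityMeasure μ]
    (a Δ : ℝ) (hΔ : 0 ≤ Δ)
    (hsupp : μ (Icc a (a + Δ))ᶜ = 0)
    (N : ℕ) (hN : 0 < N) :
    W1 ((N : ℝ≥0∞)⁻¹ •
        ∑ i ∈ Finset.range N, Measure.dirac (quantile μ ((2 * i + 1) / (2 * N)))) μ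
      ≤ Δ / (2 * N) := by
  classical
  have hNr : (0:ℝ) < N := Nat.cast_pos.mpr hN
  set q : ℝ → ℝ := quantile μ with hq_def
  set z : ℕ → ℝ := fun i => quantile μ ((2 * (i:ℝ) + 1) / (2 * (N:ℝ))) with hz_def
  set ν : Measure ℝ := (N : ℝ≥0∞)⁻¹ •
      ∑ i ∈ Finset.range N, Measure.dirac (quantile μ ((2 * (i:ℝ) + 1) / (2 * (N:ℝ)))) with hν_def
  set m : ℕ → ℝ := fun i => (2 * (i:ℝ) + 1) / (2 * (N:ℝ)) with hm_def
  have hm_pos : ∀ i, 0 < m i := fun i => by simp only [hm_def]; positivity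
  have hm_le_one : ∀ i, i < N → m i ≤ 1 := by
    intro i hi
    rw [hm_def]
    rw [div_le_one (by positivity)]
    have : (i:ℝ) + 1 ≤ N := by exact_mod_cast Nat.succ_le_of_lt hi
    linarith
  have hlm : ∀ i : ℕ, (i:ℝ)/N < m i := by
    intro i
    rw [hm_def, div_lt_div_iff₀ hNr (by positivity)]
    nlinarith
  have hmr : ∀ i : ℕ, m i < ((i:ℝ)+1)/N := by
    intro i
    rw [hm_def, div_lt_div_iff₀ (by positivity) hNr]
    nlinarith
  have hz_eq : ∀ i, z i = q (m i) := fun i => rfl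
  have hz_mem : ∀ i, i < N → z i ∈ Icc a (a + Δ) := fun i hi =>
    q_mem hsupp (hm_pos i) (hm_le_one i hi)
  have hz_mono : ∀ i j, i ≤ j → j < N → z i ≤ z j := by
    intro i j hij hj
    refine q_mono hsupp (hm_pos i) ?_ (hm_le_one j hj)
    have : (i:ℝ) ≤ j := Nat.cast_le.mpr hij
    show (2*(i:ℝ)+1)/(2*(N:ℝ)) ≤ (2*(j:ℝ)+1)/(2*(N:ℝ))
    gcongr
  -- cdf of ν
  have hcdf_ν : ∀ x : ℝ, cdf ν x =
      (((Finset.range N).filter (fun j => z j ≤ x)).card : ℝ) / N := by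
    intro x
    have h1 : ν (Iic x) = (N : ℝ≥0∞)⁻¹ *
        (((Finset.range N).filter (fun j => z j ≤ x)).card : ℝ≥0∞) := by
      rw [hν_def, Measure.smul_apply, smul_eq_mul]
      congr 1
      rw [Measure.finset_sum_apply]
      rw [← Finset.sum_boole]
      refine Finset.sum_congr rfl ?_
      intro i _
      rw [Measure.dirac_apply' _ measurableSet_Iic]
      by_cases h : z i ≤ x
      · simp [indicator, mem_Iic, h]; exact h
      · simp [indicator, mem_Iic, h]; exact not_le.mp h
    rw [cdf, h1, ENNReal.toReal_mul, ENNReal.toReal_inv]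
    simp [div_eq_inv_mul]
  -- quantile of ν on each piece
  have hA : ∀ i, i < N → ∀ u : ℝ, (i:ℝ)/N < u → u ≤ ((i:ℝ)+1)/N →
      quantile ν u = z i := by
    intro i hi u hlo hhi
    have hset : {x | u ≤ cdf ν x} = Ici (z i) := by
      ext x
      simp only [mem_setOf_eq, mem_Ici, hcdf_ν]
      constructor
      · intro h
        by_contra hx
        push_neg at hx
        have hsub : (Finset.range N).filter (fun j => z j ≤ x) ⊆ Finset.range i := by
          intro j hj
          simp only [Finset.mem_filter, Finset.mem_range] at hj ⊢
          by_contra hji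
          push_neg at hji
          exact absurd (le_trans (hz_mono i j hji hj.1) hj.2) (not_le.mpr hx)
        have hc : (((Finset.range N).filter (fun j => z j ≤ x)).card : ℝ) ≤ i := by
          have := Finset.card_le_card hsub
          simp only [Finset.card_range] at this
          exact_mod_cast this
        have : u ≤ (i:ℝ)/N := le_trans h (by gcongr)
        linarith
      · intro h
        have hsub : Finset.range (i+1) ⊆ (Finset.range N).filter (fun j => z j ≤ x) := by
          intro j hj
          simp only [Finset.mem_range] at hj
          have hjN : j < N := lt_of_lt_of_le hj (Nat.succ_le_of_lt hi)
          simp only [Finset.mem_filter, Finset.mem_range]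
          exact ⟨hjN, le_trans (hz_mono j i (Nat.lt_succ_iff.mp hj) hi) h⟩
        have hc : ((i:ℝ)+1) ≤ (((Finset.range N).filter (fun j => z j ≤ x)).card : ℝ) := by
          have := Finset.card_le_card hsub
          simp only [Finset.card_range] at this
          exact_mod_cast this
        refine le_trans hhi ?_
        gcongr
    rw [quantile, hset, csInf_Ici]
  -- covering of (0,1] by pieces
  have hco : ∀ u ∈ Ioc (0:ℝ) 1, ∃ i, i < N ∧ (i:ℝ)/N < u ∧ u ≤ ((i:ℝ)+1)/N := by
    intro u hu
    obtain ⟨hu0, hu1⟩ := hu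
    have huN0 : 0 < u * N := by positivity
    have hceil1 : 1 ≤ ⌈u * N⌉₊ := Nat.one_le_ceil_iff.mpr huN0
    have hceilN : ⌈u * N⌉₊ ≤ N := Nat.ceil_le.mpr (by nlinarith)
    refine ⟨⌈u * N⌉₊ - 1, by omega, ?_, ?_⟩
    · have hc : ((⌈u * N⌉₊ - 1 : ℕ) : ℝ) = (⌈u * N⌉₊ : ℝ) - 1 := by
        push_cast [Nat.cast_sub hceil1]; ring
      rw [div_lt_iff₀ hNr, hc]
      have := Nat.ceil_lt_add_one (le_of_lt huN0)
      linarith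
    · have hc : ((⌈u * N⌉₊ - 1 : ℕ) : ℝ) + 1 = (⌈u * N⌉₊ : ℝ) := by
        push_cast [Nat.cast_sub hceil1]; ring
      rw [le_div_iff₀ hNr, hc]
      exact Nat.le_ceil _
  -- integrand
  set f : ℝ → ℝ := fun u => |quantile ν u - q u| with hf_def
  have hq_monoOn : MonotoneOn q (Ioc (0:ℝ) 1) := by
    intro u hu v hv huv
    exact q_mono hsupp hu.1 huv hv.2
  have hA_monoOn : MonotoneOn (quantile ν) (Ioc (0:ℝ) 1) := by
    intro u hu v hv huv
    obtain ⟨i, hi, hiu1, hiu2⟩ := hco u hu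
    obtain ⟨j, hj, hjv1, hjv2⟩ := hco v hv
    rw [hA i hi u hiu1 hiu2, hA j hj v hjv1 hjv2]
    refine hz_mono i j ?_ hj
    by_contra hij
    push_neg at hij
    have : ((j:ℝ)+1) ≤ i := by exact_mod_cast Nat.succ_le_of_lt hij
    have h1 : ((j:ℝ)+1)/N ≤ (i:ℝ)/N := by gcongr
    linarith
  have hq_bdd : ∀ u ∈ Ioc (0:ℝ) 1, q u ∈ Icc a (a + Δ) := fun u hu =>
    q_mem hsupp hu.1 hu.2
  have hA_bdd : ∀ u ∈ Ioc (0:ℝ) 1, quantile ν u ∈ Icc a (a + Δ) := by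
    intro u hu
    obtain ⟨i, hi, h1, h2⟩ := hco u hu
    rw [hA i hi u h1 h2]
    exact hz_mem i hi
  have hf_int : IntegrableOn f (Ioc (0:ℝ) 1) := by
    have hm1 : AEMeasurable (quantile ν) (volume.restrict (Ioc (0:ℝ) 1)) :=
      aemeasurable_restrict_of_monotoneOn measurableSet_Ioc hA_monoOn
    have hm2 : AEMeasurable q (volume.restrict (Ioc (0:ℝ) 1)) :=
      aemeasurable_restrict_of_monotoneOn measurableSet_Ioc hq_monoOn
    refine Integrable.mono' (integrable_const Δ) (measurable_abs.comp_aemeasurable (hm1.sub hm2)).aestronglyMeasurable ?_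
    filter_upwards [ae_restrict_mem measurableSet_Ioc] with u hu
    obtain ⟨hA1, hA2⟩ := hA_bdd u hu
    obtain ⟨hq1, hq2⟩ := hq_bdd u hu
    rw [hf_def]
    simp only [Real.norm_eq_abs, abs_abs, abs_sub_le_iff]
    constructor <;> linarith
  -- telescoping endpoints
  set t : ℕ → ℝ := fun k => if k = 0 then a else if k = N then a + Δ else q ((k:ℝ)/N)
    with ht_def
  have ht0 : t 0 = a := by simp [ht_def]
  have htN : t N = a + Δ := by simp [ht_def, Nat.pos_iff_ne_zero.mp hN]
  -- lower bound on lower half, upper bound on upper half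
  have hlow : ∀ i, i < N → ∀ u, (i:ℝ)/N < u → u ≤ m i → t i ≤ q u := by
    intro i hi u h1 h2
    by_cases h0 : i = 0
    · subst h0
      simp only [ht_def, if_pos rfl]
      have hu0 : 0 < u := by
        have : (0:ℝ)/N < u := by exact_mod_cast h1
        simpa using this
      exact (q_mem hsupp hu0 (le_trans h2 (hm_le_one 0 hN))).1
    · have hiNpos : (0:ℝ) < (i:ℝ)/N := by
        have : (0:ℝ) < i := by exact_mod_cast Nat.pos_of_ne_zero h0
        positivity
      have : t i = q ((i:ℝ)/N) := by
        simp [ht_def, h0, Nat.ne_of_lt hi]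
      rw [this]
      exact q_mono hsupp hiNpos (le_of_lt h1) (le_trans h2 (hm_le_one i hi))
  have hhigh : ∀ i, i < N → ∀ u, m i < u → u ≤ ((i:ℝ)+1)/N → q u ≤ t (i+1) := by
    intro i hi u h1 h2
    by_cases hiN : i + 1 = N
    · have : t (i+1) = a + Δ := by rw [hiN, htN]
      rw [this]
      have hu1 : u ≤ 1 := by
        refine le_trans h2 ?_
        rw [div_le_one hNr]
        exact_mod_cast Nat.succ_le_of_lt hi
      exact (q_mem hsupp (lt_trans (hm_pos i) h1) hu1).2
    · have : t (i+1) = q (((i:ℝ)+1)/N) := by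
        have : ((i+1:ℕ):ℝ) = (i:ℝ)+1 := by push_cast; ring
        simp [ht_def, hiN, this]
      rw [this]
      have hi1N : (i:ℝ)+1 ≤ N := by
        have : i + 1 < N := lt_of_le_of_ne (Nat.succ_le_of_lt hi) hiN
        exact_mod_cast le_of_lt this
      refine q_mono hsupp (lt_trans (hm_pos i) h1) h2 ?_
      rw [div_le_one hNr]
      exact hi1N
  -- decompose the integral
  have hunion : Ioc (0:ℝ) 1 = ⋃ i ∈ Finset.range N, Ioc ((i:ℝ)/N) (((i:ℝ)+1)/N) := by
    ext u
    simp only [mem_iUnion, Finset.mem_range, mem_Ioc]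
    constructor
    · intro hu
      obtain ⟨i, hi, h1, h2⟩ := hco u hu
      exact ⟨i, hi, h1, h2⟩
    · rintro ⟨i, hi, h1, h2⟩
      constructor
      · have h0 : (0:ℝ) ≤ (i:ℝ)/N := by positivity
        linarith
      · refine le_trans h2 ?_
        rw [div_le_one hNr]
        exact_mod_cast Nat.succ_le_of_lt hi
  have hdisj : (↑(Finset.range N) : Set ℕ).Pairwise
      (Function.onFun Disjoint fun i : ℕ => Ioc ((i:ℝ)/N) (((i:ℝ)+1)/N)) := by
    intro i _ j _ hij
    simp only [Function.onFun, Set.Ioc_disjoint_Ioc]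
    rcases lt_or_gt_of_ne hij with h | h
    · have : ((i:ℝ)+1) ≤ j := by exact_mod_cast Nat.succ_le_of_lt h
      have h1 : ((i:ℝ)+1)/N ≤ (j:ℝ)/N := by gcongr
      calc min (((i:ℝ)+1)/N) (((j:ℝ)+1)/N) ≤ ((i:ℝ)+1)/N := min_le_left _ _
        _ ≤ (j:ℝ)/N := h1
        _ ≤ max ((i:ℝ)/N) ((j:ℝ)/N) := le_max_right _ _
    · have : ((j:ℝ)+1) ≤ i := by exact_mod_cast Nat.succ_le_of_lt h
      have h1 : ((j:ℝ)+1)/N ≤ (i:ℝ)/N := by gcongr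
      calc min (((i:ℝ)+1)/N) (((j:ℝ)+1)/N) ≤ ((j:ℝ)+1)/N := min_le_right _ _
        _ ≤ (i:ℝ)/N := h1
        _ ≤ max ((i:ℝ)/N) ((j:ℝ)/N) := le_max_left _ _
  have hsub_piece : ∀ i, i < N → Ioc ((i:ℝ)/N) (((i:ℝ)+1)/N) ⊆ Ioc (0:ℝ) 1 := by
    intro i hi u hu
    rw [hunion]
    exact mem_biUnion (Finset.mem_range.mpr hi) hu
  -- per-piece bound
  have hpiece : ∀ i, i < N →
      ∫ u in Ioc ((i:ℝ)/N) (((i:ℝ)+1)/N), f u ≤ (t (i+1) - t i) / (2*N) := by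
    intro i hi
    have hint1 : IntegrableOn f (Ioc ((i:ℝ)/N) (m i)) :=
      hf_int.mono_set (fun u hu => hsub_piece i hi ⟨hu.1, le_trans hu.2 (le_of_lt (hmr i))⟩)
    have hint2 : IntegrableOn f (Ioc (m i) (((i:ℝ)+1)/N)) :=
      hf_int.mono_set (fun u hu => hsub_piece i hi ⟨lt_trans (hlm i) hu.1, hu.2⟩)
    have hsplit : Ioc ((i:ℝ)/N) (((i:ℝ)+1)/N)
        = Ioc ((i:ℝ)/N) (m i) ∪ Ioc (m i) (((i:ℝ)+1)/N) :=
      (Set.Ioc_union_Ioc_eq_Ioc (le_of_lt (hlm i)) (le_of_lt (hmr i))).symm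
    have hd : Disjoint (Ioc ((i:ℝ)/N) (m i)) (Ioc (m i) (((i:ℝ)+1)/N)) := by
      simp [Set.Ioc_disjoint_Ioc]
    rw [hsplit, setIntegral_union hd measurableSet_Ioc hint1 hint2]
    have hvol1 : (volume (Ioc ((i:ℝ)/N) (m i))).toReal = 1/(2*N) := by
      rw [Real.volume_Ioc, ENNReal.toReal_ofReal (by linarith [hlm i])]
      simp only [hm_def]
      field_simp
      ring
    have hvol2 : (volume (Ioc (m i) (((i:ℝ)+1)/N))).toReal = 1/(2*N) := by
      rw [Real.volume_Ioc, ENNReal.toReal_ofReal (by linarith [hmr i])]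
      simp only [hm_def]
      field_simp
      ring
    have hb1 : ∫ u in Ioc ((i:ℝ)/N) (m i), f u ≤ (z i - t i) / (2*N) := by
      have : ∫ u in Ioc ((i:ℝ)/N) (m i), f u
          ≤ ∫ _ in Ioc ((i:ℝ)/N) (m i), (z i - t i) := by
        refine setIntegral_mono_on hint1
          (integrableOn_const measure_Ioc_lt_top.ne) measurableSet_Ioc ?_
        intro u hu
        have huIoc : u ∈ Ioc ((i:ℝ)/N) (((i:ℝ)+1)/N) :=
          ⟨hu.1, le_trans hu.2 (le_of_lt (hmr i))⟩
        have hu01 : u ∈ Ioc (0:ℝ) 1 := hsub_piece i hi huIoc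
        rw [hf_def]
        simp only
        rw [hA i hi u huIoc.1 huIoc.2]
        have hqu : q u ≤ z i := by
          rw [hz_eq i]
          exact hq_monoOn hu01 ⟨hm_pos i, hm_le_one i hi⟩ hu.2
        rw [abs_of_nonneg (by linarith)]
        have := hlow i hi u hu.1 hu.2
        linarith
      rw [setIntegral_const, measureReal_def, hvol1, smul_eq_mul] at this
      calc ∫ u in Ioc ((i:ℝ)/N) (m i), f u ≤ 1/(2*N) * (z i - t i) := this
        _ = (z i - t i) / (2*N) := by ring
    have hb2 : ∫ u in Ioc (m i) (((i:ℝ)+1)/N), f u ≤ (t (i+1) - z i) / (2*N) := by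
      have : ∫ u in Ioc (m i) (((i:ℝ)+1)/N), f u
          ≤ ∫ _ in Ioc (m i) (((i:ℝ)+1)/N), (t (i+1) - z i) := by
        refine setIntegral_mono_on hint2
          (integrableOn_const measure_Ioc_lt_top.ne) measurableSet_Ioc ?_
        intro u hu
        have huIoc : u ∈ Ioc ((i:ℝ)/N) (((i:ℝ)+1)/N) :=
          ⟨lt_trans (hlm i) hu.1, hu.2⟩
        have hu01 : u ∈ Ioc (0:ℝ) 1 := hsub_piece i hi huIoc
        rw [hf_def]
        simp only
        rw [hA i hi u huIoc.1 huIoc.2]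
        have hqu : z i ≤ q u := by
          rw [hz_eq i]
          exact hq_monoOn ⟨hm_pos i, hm_le_one i hi⟩ hu01 (le_of_lt hu.1)
        rw [abs_of_nonpos (by linarith)]
        have := hhigh i hi u hu.1 hu.2
        linarith
      rw [setIntegral_const, measureReal_def, hvol2, smul_eq_mul] at this
      calc ∫ u in Ioc (m i) (((i:ℝ)+1)/N), f u ≤ 1/(2*N) * (t (i+1) - z i) := this
        _ = (t (i+1) - z i) / (2*N) := by ring
    calc (∫ u in Ioc ((i:ℝ)/N) (m i), f u) + ∫ u in Ioc (m i) (((i:ℝ)+1)/N), f u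
        ≤ (z i - t i) / (2*N) + (t (i+1) - z i) / (2*N) := add_le_add hb1 hb2
      _ = (t (i+1) - t i) / (2*N) := by ring
  -- put everything together
  have hW : W1 ν μ = ∫ u in Ioc (0:ℝ) 1, f u := by
    rw [W1, ← integral_Ioc_eq_integral_Ioo]
  rw [hW]
  rw [hunion, integral_biUnion_finset (Finset.range N) (fun i _ => measurableSet_Ioc) hdisj
    (fun i hi => hf_int.mono_set (hsub_piece i (Finset.mem_range.mp hi)))]
  calc ∑ i ∈ Finset.range N, ∫ u in Ioc ((i:ℝ)/N) (((i:ℝ)+1)/N), f u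
      ≤ ∑ i ∈ Finset.range N, (t (i+1) - t i) / (2*N) :=
        Finset.sum_le_sum (fun i hi => hpiece i (Finset.mem_range.mp hi))
    _ = (∑ i ∈ Finset.range N, (t (i+1) - t i)) / (2*N) := by
        rw [Finset.sum_div]
    _ = (t N - t 0) / (2*N) := by rw [Finset.sum_range_sub]
    _ = Δ / (2*N) := by rw [ht0, htN]; ring
end

section
/- Fix N ∈ ℕ, N ≥ 2, Δ > 0, and set z_i = iΔ/N for 0 ≤ i ≤ N. Let μ = (1/(2N))·Σ_{i=0}^{N−1}(δ_{z_i} + δ_{z_{i+1}}), a probability measure supported on [0, Δ]. Then the quantile projection Π_Q μ = (1/N)·Σ_{i=0}^{N−1} δ_{z_i} satisfies W₁(μ, Π_Q μ) = Δ/(2N). -/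
open MeasureTheory Set
open scoped ENNReal

lemma card_filter_le {p : ℕ → Prop} [DecidablePred p] {N k : ℕ} (h : ∀ i, p i → i < k) :
    ((Finset.range N).filter p).card ≤ k := by
  calc ((Finset.range N).filter p).card ≤ ((Finset.range k)).card := by
        apply Finset.card_le_card
        intro i hi
        simp only [Finset.mem_filter, Finset.mem_range] at hi ⊢
        exact h i hi.2
    _ = k := Finset.card_range k

lemma card_filter_ge {p : ℕ → Prop} [DecidablePred p] {N k : ℕ} (hk : k ≤ N)
    (h : ∀ i < k, p i) : k ≤ ((Finset.range N).filter p).card := by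
  calc k = (Finset.range k).card := (Finset.card_range k).symm
    _ ≤ ((Finset.range N).filter p).card := by
        apply Finset.card_le_card
        intro i hi
        simp only [Finset.mem_range, Finset.mem_filter] at hi ⊢
        exact ⟨lt_of_lt_of_le hi hk, h i hi⟩

lemma sum_dirac_apply (s : Finset ℕ) (f : ℕ → ℝ) (x : ℝ) :
    (∑ i ∈ s, Measure.dirac (f i)) (Iic x)
      = ((s.filter (fun i => f i ≤ x)).card : ℝ≥0∞) := by
  rw [Measure.finset_sum_apply]
  simp only [Measure.dirac_apply' _ measurableSet_Iic]
  rw [Finset.card_filter]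
  push_cast
  refine Finset.sum_congr rfl fun i _ => ?_
  by_cases h : f i ≤ x <;> simp [indicator, h]

lemma cdf_nu_eq (N : ℕ) (hN : N ≠ 0) (c x : ℝ) :
    cdf ((N:ℝ≥0∞)⁻¹ • ∑ i ∈ Finset.range N, Measure.dirac ((i:ℝ) * c)) x
      = (((Finset.range N).filter (fun i : ℕ => (i:ℝ) * c ≤ x)).card : ℝ) / N := by
  unfold cdf
  rw [Measure.smul_apply, smul_eq_mul, sum_dirac_apply]
  rw [ENNReal.toReal_mul, ENNReal.toReal_inv]
  simp [div_eq_inv_mul]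

lemma cdf_mu_eq (N : ℕ) (hN : N ≠ 0) (c x : ℝ) :
    cdf ((2 * (N:ℝ≥0∞))⁻¹ • ∑ i ∈ Finset.range N,
        (Measure.dirac ((i:ℝ) * c) + Measure.dirac (((i:ℝ) + 1) * c))) x
      = ((((Finset.range N).filter (fun i : ℕ => (i:ℝ) * c ≤ x)).card
          + ((Finset.range N).filter (fun i : ℕ => ((i:ℝ) + 1) * c ≤ x)).card : ℕ) : ℝ) / (2 * N) := by
  unfold cdf
  rw [Finset.sum_add_distrib, Measure.smul_apply, smul_eq_mul, Measure.add_apply,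
    sum_dirac_apply, sum_dirac_apply]
  rw [← Nat.cast_add, ENNReal.toReal_mul, ENNReal.toReal_inv, ENNReal.toReal_mul,
    ENNReal.toReal_natCast, ENNReal.toReal_ofNat, ENNReal.toReal_natCast]
  push_cast
  ring

lemma quantile_eq_of (ν : Measure ℝ) (u x0 : ℝ)
    (h1 : u ≤ cdf ν x0) (h2 : ∀ x, x < x0 → cdf ν x < u) :
    quantile ν u = x0 := by
  refine IsLeast.csInf_eq ⟨h1, ?_⟩
  intro x hx
  by_contra h
  push_neg at h
  exact absurd hx (not_le.2 (h2 x h))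

lemma quantile_nu (N k : ℕ) (c u : ℝ) (hc : 0 < c) (hkN : k < N)
    (h1 : (k:ℝ)/N < u) (h2 : u ≤ ((k:ℝ)+1)/N) :
    quantile ((N:ℝ≥0∞)⁻¹ • ∑ i ∈ Finset.range N, Measure.dirac ((i:ℝ) * c)) u
      = (k:ℝ) * c := by
  have hN : N ≠ 0 := (lt_of_le_of_lt (Nat.zero_le k) hkN).ne'
  have hNpos : (0:ℝ) < N := Nat.cast_pos.2 (Nat.pos_of_ne_zero hN)
  apply quantile_eq_of
  · rw [cdf_nu_eq N hN]
    have hcard : k + 1 ≤ ((Finset.range N).filter (fun i : ℕ => (i:ℝ) * c ≤ (k:ℝ) * c)).card := by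
      apply card_filter_ge hkN
      intro i hi
      have : (i:ℝ) ≤ k := Nat.cast_le.2 (Nat.lt_succ_iff.1 hi)
      nlinarith
    have H : ((k:ℝ)+1) ≤ (((Finset.range N).filter (fun i : ℕ => (i:ℝ) * c ≤ (k:ℝ) * c)).card : ℝ) := by
      exact_mod_cast hcard
    calc u ≤ ((k:ℝ)+1)/N := h2
      _ ≤ _ := by apply (div_le_div_iff_of_pos_right hNpos).2; linarith
  · intro x hx
    rw [cdf_nu_eq N hN]
    have hcard : ((Finset.range N).filter (fun i : ℕ => (i:ℝ) * c ≤ x)).card ≤ k := by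
      apply card_filter_le
      intro i hi
      have h3 : (i:ℝ) * c < (k:ℝ) * c := lt_of_le_of_lt hi hx
      exact_mod_cast (mul_lt_mul_iff_left₀ hc).1 h3
    calc (((Finset.range N).filter (fun i : ℕ => (i:ℝ) * c ≤ x)).card : ℝ)/N
        ≤ (k:ℝ)/N := by
          apply (div_le_div_iff_of_pos_right hNpos).2
          exact_mod_cast hcard
      _ < u := h1

lemma quantile_mu_A (N k : ℕ) (c u : ℝ) (hc : 0 < c) (hkN : k < N)
    (h1 : (k:ℝ)/N < u) (h2 : u ≤ (2*(k:ℝ)+1)/(2*N)) :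
    quantile ((2 * (N:ℝ≥0∞))⁻¹ • ∑ i ∈ Finset.range N,
        (Measure.dirac ((i:ℝ) * c) + Measure.dirac (((i:ℝ) + 1) * c))) u
      = (k:ℝ) * c := by
  have hN : N ≠ 0 := (lt_of_le_of_lt (Nat.zero_le k) hkN).ne'
  have hNpos : (0:ℝ) < N := Nat.cast_pos.2 (Nat.pos_of_ne_zero hN)
  apply quantile_eq_of
  · rw [cdf_mu_eq N hN]
    have hc1 : k + 1 ≤ ((Finset.range N).filter (fun i : ℕ => (i:ℝ) * c ≤ (k:ℝ) * c)).card := by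
      apply card_filter_ge hkN
      intro i hi
      have : (i:ℝ) ≤ k := Nat.cast_le.2 (Nat.lt_succ_iff.1 hi)
      nlinarith
    have hc2 : k ≤ ((Finset.range N).filter (fun i : ℕ => ((i:ℝ) + 1) * c ≤ (k:ℝ) * c)).card := by
      apply card_filter_ge (le_of_lt hkN)
      intro i hi
      have : (i:ℝ) + 1 ≤ k := by exact_mod_cast Nat.succ_le_of_lt hi
      nlinarith
    have H1 : ((k:ℝ)+1) ≤ (((Finset.range N).filter (fun i : ℕ => (i:ℝ) * c ≤ (k:ℝ) * c)).card : ℝ) := by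
      exact_mod_cast hc1
    have H2 : (k:ℝ) ≤ (((Finset.range N).filter (fun i : ℕ => ((i:ℝ) + 1) * c ≤ (k:ℝ) * c)).card : ℝ) := by
      exact_mod_cast hc2
    calc u ≤ (2*(k:ℝ)+1)/(2*N) := h2
      _ ≤ _ := by
          apply (div_le_div_iff_of_pos_right (by positivity : (0:ℝ) < 2*N)).2
          push_cast
          linarith
  · intro x hx
    rw [cdf_mu_eq N hN]
    have hc1 : ((Finset.range N).filter (fun i : ℕ => (i:ℝ) * c ≤ x)).card ≤ k := by
      apply card_filter_le
      intro i hi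
      have h3 : (i:ℝ) * c < (k:ℝ) * c := lt_of_le_of_lt hi hx
      exact_mod_cast (mul_lt_mul_iff_left₀ hc).1 h3
    have hc2 : ((Finset.range N).filter (fun i : ℕ => ((i:ℝ) + 1) * c ≤ x)).card ≤ k := by
      apply card_filter_le
      intro i hi
      have h3 : ((i:ℝ) + 1) * c < (k:ℝ) * c := lt_of_le_of_lt hi hx
      have h4 : (i:ℝ) + 1 < k := (mul_lt_mul_iff_left₀ hc).1 h3
      have : (i:ℝ) < k := by linarith
      exact_mod_cast this
    calc ((((Finset.range N).filter (fun i : ℕ => (i:ℝ) * c ≤ x)).card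
          + ((Finset.range N).filter (fun i : ℕ => ((i:ℝ) + 1) * c ≤ x)).card : ℕ) : ℝ) / (2*N)
        ≤ ((2*k : ℕ) : ℝ)/(2*N) := by
          apply (div_le_div_iff_of_pos_right (by positivity : (0:ℝ) < 2*N)).2
          have H := (Nat.cast_le (α := ℝ)).2 (Nat.add_le_add hc1 hc2)
          push_cast
          push_cast at H
          linarith
      _ = (k:ℝ)/N := by push_cast; field_simp
      _ < u := h1

lemma quantile_mu_B (N k : ℕ) (c u : ℝ) (hc : 0 < c) (hkN : k < N)
    (h1 : (2*(k:ℝ)+1)/(2*N) < u) (h2 : u ≤ ((k:ℝ)+1)/N) :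
    quantile ((2 * (N:ℝ≥0∞))⁻¹ • ∑ i ∈ Finset.range N,
        (Measure.dirac ((i:ℝ) * c) + Measure.dirac (((i:ℝ) + 1) * c))) u
      = ((k:ℝ) + 1) * c := by
  have hN : N ≠ 0 := (lt_of_le_of_lt (Nat.zero_le k) hkN).ne'
  have hNpos : (0:ℝ) < N := Nat.cast_pos.2 (Nat.pos_of_ne_zero hN)
  apply quantile_eq_of
  · rw [cdf_mu_eq N hN]
    have hc1 : k + 1 ≤ ((Finset.range N).filter
        (fun i : ℕ => (i:ℝ) * c ≤ ((k:ℝ) + 1) * c)).card := by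
      apply card_filter_ge hkN
      intro i hi
      have : (i:ℝ) ≤ k := Nat.cast_le.2 (Nat.lt_succ_iff.1 hi)
      nlinarith
    have hc2 : k + 1 ≤ ((Finset.range N).filter
        (fun i : ℕ => ((i:ℝ) + 1) * c ≤ ((k:ℝ) + 1) * c)).card := by
      apply card_filter_ge hkN
      intro i hi
      have : (i:ℝ) ≤ k := Nat.cast_le.2 (Nat.lt_succ_iff.1 hi)
      nlinarith
    calc u ≤ ((k:ℝ)+1)/N := h2
      _ = (2*(k:ℝ)+2)/(2*N) := by field_simp
      _ ≤ _ := by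
          have H1 : ((k:ℝ)+1) ≤ (((Finset.range N).filter
              (fun i : ℕ => (i:ℝ) * c ≤ ((k:ℝ) + 1) * c)).card : ℝ) := by exact_mod_cast hc1
          have H2 : ((k:ℝ)+1) ≤ (((Finset.range N).filter
              (fun i : ℕ => ((i:ℝ) + 1) * c ≤ ((k:ℝ) + 1) * c)).card : ℝ) := by exact_mod_cast hc2
          apply (div_le_div_iff_of_pos_right (by positivity : (0:ℝ) < 2*N)).2
          push_cast
          linarith
  · intro x hx
    rw [cdf_mu_eq N hN]
    have hc1 : ((Finset.range N).filter (fun i : ℕ => (i:ℝ) * c ≤ x)).card ≤ k + 1 := by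
      apply card_filter_le
      intro i hi
      have h3 : (i:ℝ) * c < ((k:ℝ) + 1) * c := lt_of_le_of_lt hi hx
      have h4 : (i:ℝ) < (k:ℝ) + 1 := (mul_lt_mul_iff_left₀ hc).1 h3
      exact_mod_cast (by push_cast; linarith : (i:ℝ) < ((k + 1 : ℕ) : ℝ))
    have hc2 : ((Finset.range N).filter (fun i : ℕ => ((i:ℝ) + 1) * c ≤ x)).card ≤ k := by
      apply card_filter_le
      intro i hi
      have h3 : ((i:ℝ) + 1) * c < ((k:ℝ) + 1) * c := lt_of_le_of_lt hi hx
      have h4 : (i:ℝ) + 1 < (k:ℝ) + 1 := (mul_lt_mul_iff_left₀ hc).1 h3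
      exact_mod_cast (by linarith : (i:ℝ) < (k:ℝ))
    calc ((((Finset.range N).filter (fun i : ℕ => (i:ℝ) * c ≤ x)).card
          + ((Finset.range N).filter (fun i : ℕ => ((i:ℝ) + 1) * c ≤ x)).card : ℕ) : ℝ) / (2*N)
        ≤ ((2*k + 1 : ℕ) : ℝ)/(2*N) := by
          apply (div_le_div_iff_of_pos_right (by positivity : (0:ℝ) < 2*N)).2
          have H := (Nat.cast_le (α := ℝ)).2 (Nat.add_le_add hc1 hc2)
          push_cast
          push_cast at H
          linarith
      _ = (2*(k:ℝ)+1)/(2*N) := by push_cast; ring_nf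
      _ < u := h1


/-- A distribution achieving the worst-case quantile projection error: for
`μ = (1/(2N)) Σᵢ (δ_{zᵢ} + δ_{zᵢ₊₁})` with `zᵢ = iΔ/N`, the quantile projection
`Π_Q μ = (1/N) Σᵢ δ_{zᵢ}` satisfies `W₁(μ, Π_Q μ) = Δ/(2N)`. -/
theorem quantile_projection_error_tight
    (N : ℕ) (hN : 2 ≤ N) (Δ : ℝ) (hΔ : 0 < Δ) :
    W1 ((2 * (N : ℝ≥0∞))⁻¹ •
          ∑ i ∈ Finset.range N,
            (Measure.dirac ((i : ℝ) * Δ / N) + Measure.dirac (((i : ℝ) + 1) * Δ / N)))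
       ((N : ℝ≥0∞)⁻¹ • ∑ i ∈ Finset.range N, Measure.dirac ((i : ℝ) * Δ / N))
      = Δ / (2 * N) := by
  have hN0 : N ≠ 0 := by omega
  have hNpos : (0:ℝ) < N := Nat.cast_pos.2 (by omega)
  set c : ℝ := Δ / N with hcdef
  have hc : 0 < c := div_pos hΔ hNpos
  simp only [mul_div_assoc, ← hcdef]
  unfold W1
  set μ : Measure ℝ := (2 * (N : ℝ≥0∞))⁻¹ •
      ∑ i ∈ Finset.range N,
        (Measure.dirac ((i : ℝ) * c) + Measure.dirac (((i : ℝ) + 1) * c)) with hμ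
  set ν : Measure ℝ := (N : ℝ≥0∞)⁻¹ • ∑ i ∈ Finset.range N, Measure.dirac ((i : ℝ) * c) with hν
  set f : ℝ → ℝ := fun u => |quantile μ u - quantile ν u| with hf
  -- pointwise values
  have hfA : ∀ k, k < N → ∀ u ∈ Ioc ((k:ℝ)/N) ((2*(k:ℝ)+1)/(2*N)), f u = 0 := by
    intro k hk u hu
    have hA := quantile_mu_A N k c u hc hk hu.1 hu.2
    have hB := quantile_nu N k c u hc hk hu.1 (hu.2.trans (by
      rw [div_le_div_iff₀ (by positivity) hNpos]; ring_nf; nlinarith))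
    simp [hf, hμ, hν, hA, hB]
  have hfB : ∀ k, k < N → ∀ u ∈ Ioc ((2*(k:ℝ)+1)/(2*N)) (((k:ℝ)+1)/N), f u = c := by
    intro k hk u hu
    have hklt : (k:ℝ)/N < u := lt_of_le_of_lt (by
      rw [div_le_div_iff₀ hNpos (by positivity)]; nlinarith) hu.1
    have hA := quantile_mu_B N k c u hc hk hu.1 hu.2
    have hB := quantile_nu N k c u hc hk hklt hu.2
    rw [hf]
    simp only [hμ, hν, hA, hB]
    rw [show ((k:ℝ)+1)*c - (k:ℝ)*c = c by ring, abs_of_pos hc]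
  -- per-interval integrals
  have key : ∀ k, k < N → (IntervalIntegrable f volume ((k:ℝ)/N) (((k:ℝ)+1)/N)
      ∧ ∫ u in ((k:ℝ)/N)..(((k:ℝ)+1)/N), f u = c/(2*N)) := by
    intro k hk
    set a : ℝ := (k:ℝ)/N
    set m : ℝ := (2*(k:ℝ)+1)/(2*N)
    set b : ℝ := ((k:ℝ)+1)/N
    have ham : a ≤ m := by rw [div_le_div_iff₀ hNpos (by positivity)]; nlinarith
    have hmb : m ≤ b := by rw [div_le_div_iff₀ (by positivity) hNpos]; nlinarith
    have hab : a ≤ b := ham.trans hmb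
    have hI1 : IntegrableOn f (Ioc a m) volume := by
      apply (integrableOn_const measure_Ioc_lt_top.ne).congr_fun
        (fun u hu => (hfA k hk u hu).symm) measurableSet_Ioc
    have hI2 : IntegrableOn f (Ioc m b) volume := by
      apply (integrableOn_const measure_Ioc_lt_top.ne).congr_fun
        (fun u hu => (hfB k hk u hu).symm) measurableSet_Ioc
    have hunion : Ioc a b = Ioc a m ∪ Ioc m b := (Ioc_union_Ioc_eq_Ioc ham hmb).symm
    have hIoc : IntegrableOn f (Ioc a b) volume := by
      rw [hunion]; exact hI1.union hI2
    have hint : IntervalIntegrable f volume a b := by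
      rw [intervalIntegrable_iff, uIoc_of_le hab]; exact hIoc
    refine ⟨hint, ?_⟩
    rw [intervalIntegral.integral_of_le hab, hunion,
      setIntegral_union (Ioc_disjoint_Ioc_of_le le_rfl) measurableSet_Ioc hI1 hI2]
    have e1 : ∫ u in Ioc a m, f u = 0 := by
      rw [setIntegral_congr_fun measurableSet_Ioc (fun u hu => hfA k hk u hu)]
      simp
    have e2 : ∫ u in Ioc m b, f u = c/(2*N) := by
      rw [setIntegral_congr_fun measurableSet_Ioc (fun u hu => hfB k hk u hu)]
      rw [setIntegral_const]
      rw [measureReal_def, Real.volume_Ioc, smul_eq_mul]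
      rw [ENNReal.toReal_ofReal (by linarith)]
      have : b - m = 1/(2*N) := by
        have hne : (N:ℝ) ≠ 0 := hNpos.ne'
        simp only [b, m]
        field_simp
        try ring
        try exact mul_inv_cancel₀ hne
      rw [this]
      ring
    rw [e1, e2]; ring
  -- assemble
  have hIoo : ∫ u in Ioo (0:ℝ) 1, f u = ∫ u in Ioc (0:ℝ) 1, f u :=
    setIntegral_congr_set Ioo_ae_eq_Ioc
  have hsum : ∫ u in (0:ℝ)..(1:ℝ), f u = ∑ k ∈ Finset.range N, c/(2*N) := by
    have adj : ∑ k ∈ Finset.range N, (∫ u in ((k:ℝ)/N)..(((k:ℝ)+1)/N), f u)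
        = ∫ u in (((0:ℕ):ℝ)/N)..(((N:ℕ):ℝ)/N), f u := by
      have := intervalIntegral.sum_integral_adjacent_intervals
        (f := f) (μ := volume) (a := fun k : ℕ => (k:ℝ)/N) (n := N) ?_
      · convert this using 2 with k
        push_cast
        ring_nf
      · intro k hk
        have h := (key k hk).1
        convert h using 2
        push_cast
        ring_nf
    rw [show ((0:ℝ)) = ((0:ℕ):ℝ)/N by simp, show ((1:ℝ)) = ((N:ℕ):ℝ)/N by
      field_simp]
    rw [← adj]
    apply Finset.sum_congr rfl
    intro k hk
    exact (key k (Finset.mem_range.1 hk)).2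
  rw [hIoo, ← intervalIntegral.integral_of_le (by norm_num : (0:ℝ) ≤ 1), hsum]
  rw [Finset.sum_const, Finset.card_range, nsmul_eq_mul, hcdef]
  field_simp
end

section
/- Fix N ≥ 2 and Δ > 0, set z_i = iΔ/N for 0 ≤ i ≤ N and μ_{N,Δ} = (1/(2N))·Σ_{i=0}^{N−1}(δ_{z_i} + δ_{z_{i+1}}). Let ρ = (1/2)(δ₀ + δ_{Δ/(N−1)}) and let Π be the map sending μ_{N,Δ} to (1/N)·Σ_{i=0}^{N−1} δ_{iΔ/(N−1)}. Then the convolution ρ ∗ Π(μ_{N,Δ}) equals μ_{N, Δ(1+1/(N−1))}, i.e., μ_{N,Δ'} with Δ' = Δ + Δ/(N−1). -/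
open MeasureTheory Set
open scoped ENNReal

/-- The measure `μ_{N,Δ} = (1/(2N)) Σᵢ (δ_{iΔ/N} + δ_{(i+1)Δ/N})`. -/
noncomputable def muND (N : ℕ) (Δ : ℝ) : Measure ℝ :=
  (2 * (N : ℝ≥0∞))⁻¹ •
    ∑ i ∈ Finset.range N,
      (Measure.dirac ((i : ℝ) * Δ / N) + Measure.dirac (((i : ℝ) + 1) * Δ / N))

section aux

variable {α β : Type*} [MeasurableSpace α] [MeasurableSpace β]

lemma smul_prod' (c : ℝ≥0∞) (μ : MeasureTheory.Measure α) (ν : MeasureTheory.Measure β)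
    [SFinite ν] : (c • μ).prod ν = c • μ.prod ν := by
  ext s hs
  rw [Measure.prod_apply hs, MeasureTheory.lintegral_smul_measure, Measure.smul_apply,
    smul_eq_mul, Measure.prod_apply hs]
  rfl

lemma prod_smul' (c : ℝ≥0∞) (μ : MeasureTheory.Measure α) (ν : MeasureTheory.Measure β)
    [SFinite ν] : μ.prod (c • ν) = c • μ.prod ν := by
  ext s hs
  rw [Measure.prod_apply hs, Measure.smul_apply, smul_eq_mul, Measure.prod_apply hs]
  simp only [Measure.smul_apply, smul_eq_mul]
  rw [MeasureTheory.lintegral_const_mul _ (measurable_measure_prodMk_left hs)]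

variable {M : Type*} [AddMonoid M] [MeasurableSpace M] [MeasurableAdd₂ M]

lemma smul_conv' (c : ℝ≥0∞) (μ ν : MeasureTheory.Measure M) [SFinite ν] :
    (c • μ).conv ν = c • μ.conv ν := by
  unfold Measure.conv
  rw [smul_prod', Measure.map_smul]

lemma conv_smul' (c : ℝ≥0∞) (μ ν : MeasureTheory.Measure M) [SFinite ν] :
    μ.conv (c • ν) = c • μ.conv ν := by
  unfold Measure.conv
  rw [prod_smul', Measure.map_smul]

lemma dirac_conv_dirac' (x y : M) :
    (Measure.dirac x).conv (Measure.dirac y) = Measure.dirac (x + y) := by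
  unfold Measure.conv
  rw [Measure.dirac_prod_dirac, Measure.map_dirac' measurable_add]

lemma sfinite_finset_sum {ι : Type*} (s : Finset ι) (ν : ι → MeasureTheory.Measure M)
    [∀ i, SFinite (ν i)] : SFinite (∑ i ∈ s, ν i) := by
  classical
  induction s using Finset.induction with
  | empty => simpa using inferInstanceAs (SFinite (0 : MeasureTheory.Measure M))
  | @insert a t hi ih =>
    rw [Finset.sum_insert hi]
    haveI := ih
    infer_instance

lemma conv_finset_sum {ι : Type*} (s : Finset ι) (μ : MeasureTheory.Measure M) [SFinite μ]
    (ν : ι → MeasureTheory.Measure M) [∀ i, IsFiniteMeasure (ν i)] :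
    μ.conv (∑ i ∈ s, ν i) = ∑ i ∈ s, μ.conv (ν i) := by
  classical
  induction s using Finset.induction with
  | empty => simp [Measure.conv]
  | @insert a t hi ih =>
    rw [Finset.sum_insert hi, Finset.sum_insert hi, ← ih]
    haveI : SFinite (∑ i ∈ t, ν i) := sfinite_finset_sum t ν
    exact Measure.conv_add μ _ _

end aux

/-- Convolving the reward `ρ = (1/2)(δ₀ + δ_{Δ/(N−1)})` with the quantile
projection `(1/N) Σᵢ δ_{iΔ/(N−1)}` of `μ_{N,Δ}` yields exactly
`μ_{N, Δ + Δ/(N−1)}`: the worst-case projection error recurs at every step. -/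
theorem convolution_projection_recursion
    (N : ℕ) (hN : 2 ≤ N) (Δ : ℝ) (hΔ : 0 < Δ) :
    Measure.conv ((2 : ℝ≥0∞)⁻¹ • (Measure.dirac (0:ℝ) + Measure.dirac (Δ / ((N : ℝ) - 1))))
        ((N : ℝ≥0∞)⁻¹ • ∑ i ∈ Finset.range N, Measure.dirac ((i : ℝ) * Δ / ((N : ℝ) - 1)))
      = muND N (Δ + Δ / ((N : ℝ) - 1)) := by
  have hN1 : (N : ℝ) - 1 ≠ 0 := by
    have : (2 : ℝ) ≤ N := by exact_mod_cast hN
    linarith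
  have hNr : (N : ℝ) ≠ 0 := by
    have : (2 : ℝ) ≤ N := by exact_mod_cast hN
    linarith
  have hSF : SFinite (∑ i ∈ Finset.range N, Measure.dirac ((i : ℝ) * Δ / ((N : ℝ) - 1))) :=
    inferInstance
  rw [smul_conv', conv_smul', conv_finset_sum]
  have hpt : ∀ i : ℕ,
      (Measure.dirac (0:ℝ) + Measure.dirac (Δ / ((N : ℝ) - 1))).conv
          (Measure.dirac ((i : ℝ) * Δ / ((N : ℝ) - 1)))
        = Measure.dirac ((i : ℝ) * (Δ + Δ / ((N : ℝ) - 1)) / N)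
          + Measure.dirac (((i : ℝ) + 1) * (Δ + Δ / ((N : ℝ) - 1)) / N) := by
    intro i
    rw [Measure.add_conv, dirac_conv_dirac', dirac_conv_dirac']
    have h1 : (0 : ℝ) + (i : ℝ) * Δ / ((N : ℝ) - 1) = (i : ℝ) * (Δ + Δ / ((N : ℝ) - 1)) / N := by
      field_simp
      ring
    have h2 : Δ / ((N : ℝ) - 1) + (i : ℝ) * Δ / ((N : ℝ) - 1)
        = ((i : ℝ) + 1) * (Δ + Δ / ((N : ℝ) - 1)) / N := by
      field_simp
      ring
    rw [h1, h2, add_comm]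
  rw [Finset.sum_congr rfl fun i _ => hpt i]
  unfold muND
  rw [smul_smul]
  congr 1
  rw [ENNReal.mul_inv (Or.inl two_ne_zero) (Or.inl ENNReal.ofNat_ne_top)]
end
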